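/- For Φ([[a,b],[c,d]]) = [[(a+d)/2, λ₀b],[λ̄₀c, (a+d)/2]] on M₂(ℂ), where |λ₀| = 1, λ₀ ∉ {1,-1}, and λ₀³ ∉ {1,-1}, the set of eigenvalues of modulus one of the semigroup (Φⁿ : n ≥ 0) equals {1, λ₀, λ̄₀}, and this set is not closed under multiplication (hence not a group). -/

import Mathlib

/-- For Φ([[a,b],[c,d]]) = [[(a+d)/2, λ₀b],[λ̄₀c, (a+d)/2]] on M₂(ℂ) with
|λ₀| = 1, λ₀ ∉ {1,-1} and λ₀³ ∉ {1,-1}, the point spectrum of (Φⁿ) is {1, λ₀, λ̄₀},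
and this set is not closed under multiplication (hence not a group). -/
theorem phi_point_spectrum_not_group (l : ℂ) (hl : ‖l‖ = 1)
    (h1 : l ≠ 1) (h2 : l ≠ -1) (h3 : l ^ 3 ≠ 1) (h4 : l ^ 3 ≠ -1) :
    {lam : ℂ | ‖lam‖ = 1 ∧ ∃ x : Matrix (Fin 2) (Fin 2) ℂ, x ≠ 0 ∧
        !![(x 0 0 + x 1 1) / 2, l * x 0 1;
           (starRingEnd ℂ) l * x 1 0, (x 0 0 + x 1 1) / 2] = lam • x} =
      {1, l, starRingEnd ℂ l} ∧
    ¬ (∀ a ∈ ({1, l, starRingEnd ℂ l} : Set ℂ), ∀ b ∈ ({1, l, starRingEnd ℂ l} : Set ℂ),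
        a * b ∈ ({1, l, starRingEnd ℂ l} : Set ℂ)) := by
  have hl0 : l ≠ 0 := by intro h; rw [h] at hl; simp at hl
  have hmc : l * (starRingEnd ℂ) l = 1 := by
    rw [Complex.mul_conj]
    norm_cast
    rw [Complex.normSq_eq_norm_sq, hl]; norm_num
  constructor
  · ext lam
    simp only [Set.mem_setOf_eq, Set.mem_insert_iff, Set.mem_singleton_iff]
    constructor
    · rintro ⟨hnorm, x, hx0, hx⟩
      have hlam0 : lam ≠ 0 := by intro h; rw [h] at hnorm; simp at hnorm
      have h00 := congrFun (congrFun hx 0) 0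
      have h01 := congrFun (congrFun hx 0) 1
      have h10 := congrFun (congrFun hx 1) 0
      have h11 := congrFun (congrFun hx 1) 1
      simp [Matrix.smul_apply] at h00 h01 h10 h11
      by_cases hb : x 0 1 = 0
      · by_cases hc : x 1 0 = 0
        · -- diagonal case
          have had : x 0 0 = x 1 1 := by
            have : lam * x 0 0 = lam * x 1 1 := by rw [← h00, ← h11]
            exact mul_left_cancel₀ hlam0 this
          have ha0 : x 0 0 ≠ 0 := by
            intro ha
            apply hx0
            ext i j
            fin_cases i <;> fin_cases j <;>
              simp [ha, hb, hc, ← had, ha]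
          left
          have he : 1 * x 0 0 = lam * x 0 0 := by
            rw [one_mul, ← h00, ← had]; ring
          exact (mul_right_cancel₀ ha0 he).symm
        · right; right
          exact (h10.resolve_right hc).symm
      · right; left
        exact (h01.resolve_right hb).symm
    · rintro (rfl | rfl | rfl)
      · exact ⟨by simp, !![1, 0; 0, 1], by
          intro h
          have := congrFun (congrFun h 0) 0
          simp at this, by
          ext i j; fin_cases i <;> fin_cases j <;> simp⟩
      · exact ⟨hl, !![0, 1; 0, 0], by
          intro h
          have := congrFun (congrFun h 0) 1
          simp at this, by
          ext i j; fin_cases i <;> fin_cases j <;> simp⟩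
      · exact ⟨by rwa [RCLike.norm_conj], !![0, 0; 1, 0], by
          intro h
          have := congrFun (congrFun h 1) 0
          simp at this, by
          ext i j; fin_cases i <;> fin_cases j <;> simp⟩
  · intro h
    have hmem : l ∈ ({1, l, starRingEnd ℂ l} : Set ℂ) := by right; left; rfl
    have := h l hmem l hmem
    rcases this with hll | hll | hll
    · have : (l - 1) * (l + 1) = 0 := by ring_nf; linear_combination hll
      rcases mul_eq_zero.mp this with h' | h'
      · exact h1 (sub_eq_zero.mp h')
      · exact h2 (by exact eq_neg_of_add_eq_zero_left h')
    · exact h1 (mul_left_cancel₀ hl0 (by rw [hll, mul_one]))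
    · apply h3
      have : l * (l * l) = l * starRingEnd ℂ l := by rw [hll]
      rw [hmc] at this
      calc l ^ 3 = l * (l * l) := by ring
        _ = 1 := this
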